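/- If b ≡ -1 (mod n) and c ≡ -d (mod n), then the propeller graph Pr_n(b,c,d) is isomorphic to the line graph of the generalized Petersen graph GP(n,d), via the map sending A_i to the edge {u_i,u_{i+1}}, B_i to the edge {u_i,v_i}, and C_i to the edge {v_i,v_{i+d}}. -/

import Mathlib

/-- Vertices of a propeller graph: `A i`, `B i`, `C i` for `i : ZMod n`. -/
inductive PVert (n : ℕ) : Type
  | A (i : ZMod n)
  | B (i : ZMod n)
  | C (i : ZMod n)
  deriving DecidableEq

open PVert

/-- One-directional edge relation of the propeller graph `Pr_n(b,c,d)`. -/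
def propellerRel (n : ℕ) (b c d : ZMod n) (u v : PVert n) : Prop :=
  ∃ i : ZMod n,
    (u = A i ∧ v = A (i + 1)) ∨ (u = A i ∧ v = B i) ∨ (u = B i ∧ v = A (i + b)) ∨
    (u = B i ∧ v = C (i + c)) ∨ (u = C i ∧ v = B i) ∨ (u = C i ∧ v = C (i + d))

/-- The propeller graph `Pr_n(b,c,d)`: a tetravalent graph on `3n` vertices. -/
def propeller (n : ℕ) (b c d : ZMod n) : SimpleGraph (PVert n) where
  Adj u v := u ≠ v ∧ (propellerRel n b c d u v ∨ propellerRel n b c d v u)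
  symm := ⟨fun _ _ h => ⟨h.1.symm, h.2.symm⟩⟩
  loopless := ⟨fun _ h => h.1 rfl⟩

/-- One-directional edge relation of the generalized Petersen graph `GP(n,d)`:
outer vertices `u_i = Sum.inl i`, inner vertices `v_i = Sum.inr i`. -/
def genPetersenRel (n : ℕ) (d : ZMod n) (x y : ZMod n ⊕ ZMod n) : Prop :=
  ∃ i : ZMod n,
    (x = Sum.inl i ∧ y = Sum.inl (i + 1)) ∨ (x = Sum.inl i ∧ y = Sum.inr i) ∨
    (x = Sum.inr i ∧ y = Sum.inr (i + d))

/-- The generalized Petersen graph `GP(n,d)`. -/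
def genPetersen (n : ℕ) (d : ZMod n) : SimpleGraph (ZMod n ⊕ ZMod n) where
  Adj x y := x ≠ y ∧ (genPetersenRel n d x y ∨ genPetersenRel n d y x)
  symm := ⟨fun _ _ h => ⟨h.1.symm, h.2.symm⟩⟩
  loopless := ⟨fun _ h => h.1 rfl⟩

section Aux
variable {n : ℕ} {d' : ZMod n}

private lemma adjA (h1 : (1:ZMod n) ≠ 0) (i : ZMod n) :
    (genPetersen n d').Adj (Sum.inl i) (Sum.inl (i+1)) :=
  ⟨fun h => h1 (left_eq_add.mp (Sum.inl.inj h)), Or.inl ⟨i, Or.inl ⟨rfl, rfl⟩⟩⟩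

private lemma adjB (i : ZMod n) : (genPetersen n d').Adj (Sum.inl i) (Sum.inr i) :=
  ⟨Sum.inl_ne_inr, Or.inl ⟨i, Or.inr (Or.inl ⟨rfl, rfl⟩)⟩⟩

private lemma adjC (hdne : d' ≠ 0) (i : ZMod n) :
    (genPetersen n d').Adj (Sum.inr i) (Sum.inr (i+d')) :=
  ⟨fun h => hdne (left_eq_add.mp (Sum.inr.inj h)), Or.inl ⟨i, Or.inr (Or.inr ⟨rfl, rfl⟩)⟩⟩

/-- The vertex map from the propeller graph to the line graph of `GP(n,d)`. -/
def pmap (h1 : (1:ZMod n) ≠ 0) (hdne : d' ≠ 0) : PVert n → (genPetersen n d').edgeSet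
  | A i => ⟨s(Sum.inl i, Sum.inl (i+1)), adjA h1 i⟩
  | B i => ⟨s(Sum.inl i, Sum.inr i), adjB i⟩
  | C i => ⟨s(Sum.inr i, Sum.inr (i+d')), adjC hdne i⟩

lemma pmap_inj (h1 : (1:ZMod n) ≠ 0) (h2 : (1:ZMod n) + 1 ≠ 0) (hdne : d' ≠ 0)
    (hd2 : d' + d' ≠ 0) : Function.Injective (pmap h1 hdne) := by
  intro x y h
  cases x <;> cases y <;>
    simp only [pmap, Subtype.mk.injEq, Subtype.ext_iff, Sym2.eq_iff, Sum.inl.injEq, Sum.inr.injEq] at h <;>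
    try simp_all
  · rcases h with ⟨rfl, -⟩ | ⟨h1', h2'⟩
    · rfl
    · exact absurd (by linear_combination h2' - h1') h2
  · rcases h with ⟨rfl, -⟩ | ⟨h1', h2'⟩
    · rfl
    · exact absurd (by linear_combination h2' - h1') hd2

lemma pmap_surj (h1 : (1:ZMod n) ≠ 0) (hdne : d' ≠ 0) :
    Function.Surjective (pmap h1 hdne) := by
  rintro ⟨e, he⟩
  induction e with
  | _ x y =>
    rw [SimpleGraph.mem_edgeSet] at he
    rcases he.2 with ⟨i, ⟨rfl, rfl⟩ | ⟨rfl, rfl⟩ | ⟨rfl, rfl⟩⟩ |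
      ⟨i, ⟨rfl, rfl⟩ | ⟨rfl, rfl⟩ | ⟨rfl, rfl⟩⟩
    · exact ⟨A i, rfl⟩
    · exact ⟨B i, rfl⟩
    · exact ⟨C i, rfl⟩
    · exact ⟨A i, Subtype.ext (Sym2.eq_swap)⟩
    · exact ⟨B i, Subtype.ext (Sym2.eq_swap)⟩
    · exact ⟨C i, Subtype.ext (Sym2.eq_swap)⟩

lemma pmap_rel (h1 : (1:ZMod n) ≠ 0) (h2 : (1:ZMod n) + 1 ≠ 0) (hdne : d' ≠ 0)
    (hd2 : d' + d' ≠ 0) :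
    ∀ x y, (genPetersen n d').lineGraph.Adj (pmap h1 hdne x) (pmap h1 hdne y) ↔
      (propeller n (-1) (-d') d').Adj x y := by
  intro x y
  cases x <;> cases y <;>
    simp [SimpleGraph.lineGraph_adj_iff_exists, pmap, propeller, propellerRel,
      Subtype.ext_iff, Sym2.eq_iff, ne_eq]
  case A.A =>
    rename_i i j
    constructor
    · rintro ⟨⟨hne, -⟩, (h | h) | (h | h)⟩
      · exact absurd h hne
      · exact ⟨hne, Or.inr h⟩
      · exact ⟨hne, Or.inl h.symm⟩
      · exact absurd h hne
    · rintro ⟨hne, h | h⟩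
      · exact ⟨⟨hne, fun hp hq => h2 (by linear_combination hq - hp)⟩,
          Or.inr (Or.inl h.symm)⟩
      · exact ⟨⟨hne, fun hp hq => h2 (by linear_combination hq - hp)⟩,
          Or.inl (Or.inr h)⟩
  case C.C =>
    rename_i i j
    constructor
    · rintro ⟨⟨hne, -⟩, (h | h) | (h | h)⟩
      · exact absurd h hne
      · exact ⟨hne, Or.inr h⟩
      · exact ⟨hne, Or.inl h.symm⟩
      · exact absurd h hne
    · rintro ⟨hne, h | h⟩
      · exact ⟨⟨hne, fun hp hq => hd2 (by linear_combination hq - hp)⟩,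
          Or.inr (Or.inl h.symm)⟩
      · exact ⟨⟨hne, fun hp hq => hd2 (by linear_combination hq - hp)⟩,
          Or.inl (Or.inr h)⟩
  all_goals
    constructor <;> rintro (h | h) <;>
      first
        | (left; linear_combination h)
        | (right; linear_combination h)
        | (left; linear_combination -h)
        | (right; linear_combination -h)

end Aux

/-- if `b ≡ -1` and `c ≡ -d (mod n)`, then `Pr_n(b,c,d)` is isomorphic to the
line graph of `GP(n,d)`, via `A_i ↦ {u_i,u_{i+1}}`, `B_i ↦ {u_i,v_i}`, `C_i ↦ {v_i,v_{i+d}}`. -/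
theorem propeller_girth3_iso_lineGraph_genPetersen
    (n b c d : ℕ) (hn : 3 ≤ n) (hd : 0 < d ∧ 2 * d < n)
    (hb : (b : ZMod n) = -1) (hc : (c : ZMod n) = -(d : ZMod n)) :
    ∃ φ : propeller n b c d ≃g (genPetersen n d).lineGraph,
      ∀ i : ZMod n,
        (φ (A i) : Sym2 (ZMod n ⊕ ZMod n)) = s(Sum.inl i, Sum.inl (i + 1)) ∧
        (φ (B i) : Sym2 (ZMod n ⊕ ZMod n)) = s(Sum.inl i, Sum.inr i) ∧
        (φ (C i) : Sym2 (ZMod n ⊕ ZMod n)) = s(Sum.inr i, Sum.inr (i + (d : ZMod n))) := by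
  haveI : Fact (1 < n) := ⟨by omega⟩
  have h1 : (1 : ZMod n) ≠ 0 := one_ne_zero
  have h2 : (1 : ZMod n) + 1 ≠ 0 := by
    have h : ¬ ((2 : ℕ) : ZMod n) = 0 := by
      rw [ZMod.natCast_eq_zero_iff]
      intro hdvd
      have := Nat.le_of_dvd (by omega) hdvd
      omega
    intro hcon
    exact h (by push_cast; linear_combination hcon)
  have hdne : (d : ZMod n) ≠ 0 := by
    rw [Ne, ZMod.natCast_eq_zero_iff]
    intro hdvd
    have := Nat.le_of_dvd hd.1 hdvd
    omega
  have hd2 : (d : ZMod n) + (d : ZMod n) ≠ 0 := by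
    have : ((2 * d : ℕ) : ZMod n) ≠ 0 := by
      rw [Ne, ZMod.natCast_eq_zero_iff]
      intro hdvd
      have := Nat.le_of_dvd (by omega) hdvd
      omega
    intro hcon
    exact this (by push_cast; linear_combination hcon)
  rw [hb, hc]
  exact ⟨{ toEquiv := Equiv.ofBijective _ ⟨pmap_inj h1 h2 hdne hd2, pmap_surj h1 hdne⟩,
           map_rel_iff' := fun {a b} => pmap_rel h1 h2 hdne hd2 a b },
         fun i => ⟨rfl, rfl, rfl⟩⟩
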